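/- arXiv:1702.01092 — 2 statements merged into one kernel-verified Lean document; each statement's English description precedes it below -/
import Mathlib

section
/- Let $X_1,\ldots,X_n$ be L-weakly dependent random variables with coefficients $(\gamma_k)_{k\geq 1}$. Then for every $t \in \mathbb{R}$, $\left|\mathbb{E}\prod_{j=1}^n e^{itX_j} - \prod_{j=1}^n \mathbb{E}e^{itX_j}\right| \leq 4t^2 \sum_{j=1}^{n-1}(n-j)\gamma_j$. -/
open MeasureTheory ProbabilityTheory Filter

noncomputable def cov {Ω : Type*} [MeasurableSpace Ω] (μ : Measure Ω) (f g : Ω → ℝ) : ℝ :=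
  (∫ ω, f ω * g ω ∂μ) - (∫ ω, f ω ∂μ) * (∫ ω, g ω ∂μ)

/-- L-weak dependence for a finite family `X : Fin n → Ω → ℝ`: for all disjoint index sets
`I, J` and functions `f, g` that are Lipschitz (w.r.t. the ℓ¹ metric) depending only on the
coordinates in `I` resp. `J`, the covariance is controlled by the coefficients `γ`. -/
def LWeakDepFin {Ω : Type*} [MeasurableSpace Ω] (μ : Measure Ω) {n : ℕ}
    (X : Fin n → Ω → ℝ) (γ : ℕ → ℝ) : Prop :=
  ∀ (I J : Finset (Fin n)), Disjoint I J →
    ∀ (f g : (Fin n → ℝ) → ℝ) (Lf Lg : ℝ),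
      (∀ x y, |f x - f y| ≤ Lf * ∑ i ∈ I, |x i - y i|) →
      (∀ x y, |g x - g y| ≤ Lg * ∑ j ∈ J, |x j - y j|) →
      |cov μ (fun ω => f (fun i => X i ω)) (fun ω => g (fun i => X i ω))|
        ≤ Lf * Lg * ∑ i ∈ I, ∑ j ∈ J, γ (((j : ℤ) - (i : ℤ)).natAbs)

namespace Stmt6Aux

lemma abs_cos_sub_cos_le (a b : ℝ) : |Real.cos a - Real.cos b| ≤ |a - b| := by
  rw [Real.cos_sub_cos]
  rw [abs_mul, abs_mul, abs_neg]
  have h1 : |Real.sin ((a + b) / 2)| ≤ 1 :=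
    abs_le.mpr ⟨Real.neg_one_le_sin _, Real.sin_le_one _⟩
  have h2 : |Real.sin ((a - b) / 2)| ≤ |(a - b) / 2| := Real.abs_sin_le_abs
  calc |(2:ℝ)| * |Real.sin ((a + b) / 2)| * |Real.sin ((a - b) / 2)|
      ≤ 2 * 1 * |(a - b) / 2| := by
        rw [abs_two]
        gcongr
    _ = |a - b| := by rw [abs_div, abs_two]; ring

lemma abs_sin_sub_sin_le (a b : ℝ) : |Real.sin a - Real.sin b| ≤ |a - b| := by
  rw [Real.sin_sub_sin]
  rw [abs_mul, abs_mul]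
  have h1 : |Real.cos ((a + b) / 2)| ≤ 1 :=
    abs_le.mpr ⟨Real.neg_one_le_cos _, Real.cos_le_one _⟩
  have h2 : |Real.sin ((a - b) / 2)| ≤ |(a - b) / 2| := Real.abs_sin_le_abs
  calc |(2:ℝ)| * |Real.sin ((a - b) / 2)| * |Real.cos ((a + b) / 2)|
      ≤ 2 * |(a - b) / 2| * 1 := by
        rw [abs_two]
        gcongr
    _ = |a - b| := by rw [abs_div, abs_two]; ring

variable {Ω : Type*} [MeasurableSpace Ω] {μ : Measure Ω}

lemma integral_complex_ofReal {f : Ω → ℝ} :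
    (∫ ω, ((f ω : ℝ) : ℂ) ∂μ) = ((∫ ω, f ω ∂μ : ℝ) : ℂ) :=
  integral_ofReal

lemma integrable_of_bdd [IsProbabilityMeasure μ]
    {f : Ω → ℝ} (hf : Measurable f) (h : ∀ ω, |f ω| ≤ 1) : Integrable f μ :=
  (integrable_const (1:ℝ)).mono' hf.aestronglyMeasurable
    (Eventually.of_forall fun ω => by simpa using h ω)

/-- Bound on the complex covariance of `exp(itX_m)` with a product over `J`. -/
lemma covC_bound [IsProbabilityMeasure μ]
    {n : ℕ} (X : Fin n → Ω → ℝ) (hmeas : ∀ j, Measurable (X j))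
    (γ : ℕ → ℝ) (hdep : LWeakDepFin μ X γ) (t : ℝ)
    (m : Fin n) (J : Finset (Fin n)) (hmJ : m ∉ J) :
    ‖(∫ ω, Complex.exp (Complex.I * ((t * X m ω : ℝ) : ℂ))
          * ∏ j ∈ J, Complex.exp (Complex.I * ((t * X j ω : ℝ) : ℂ)) ∂μ)
      - (∫ ω, Complex.exp (Complex.I * ((t * X m ω : ℝ) : ℂ)) ∂μ)
          * (∫ ω, ∏ j ∈ J, Complex.exp (Complex.I * ((t * X j ω : ℝ) : ℂ)) ∂μ)‖
      ≤ 4 * t ^ 2 * ∑ j ∈ J, γ (((j : ℤ) - (m : ℤ)).natAbs) := by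
  classical
  set c : Ω → ℝ := fun ω => Real.cos (t * X m ω) with hc
  set s : Ω → ℝ := fun ω => Real.sin (t * X m ω) with hs
  set S : Ω → ℝ := fun ω => ∑ j ∈ J, X j ω with hS
  set C : Ω → ℝ := fun ω => Real.cos (t * S ω) with hC
  set D : Ω → ℝ := fun ω => Real.sin (t * S ω) with hD
  have hmc : Measurable c := Real.measurable_cos.comp (measurable_const.mul (hmeas m))
  have hms : Measurable s := Real.measurable_sin.comp (measurable_const.mul (hmeas m))
  have hmS : Measurable S := Finset.measurable_sum J fun j _ => hmeas j
  have hmC : Measurable C := Real.measurable_cos.comp (measurable_const.mul hmS)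
  have hmD : Measurable D := Real.measurable_sin.comp (measurable_const.mul hmS)
  have bc : ∀ ω, |c ω| ≤ 1 := fun ω => abs_le.mpr ⟨Real.neg_one_le_cos _, Real.cos_le_one _⟩
  have bs : ∀ ω, |s ω| ≤ 1 := fun ω => abs_le.mpr ⟨Real.neg_one_le_sin _, Real.sin_le_one _⟩
  have bC : ∀ ω, |C ω| ≤ 1 := fun ω => abs_le.mpr ⟨Real.neg_one_le_cos _, Real.cos_le_one _⟩
  have bD : ∀ ω, |D ω| ≤ 1 := fun ω => abs_le.mpr ⟨Real.neg_one_le_sin _, Real.sin_le_one _⟩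
  -- pointwise forms
  have h1 : ∀ ω, Complex.exp (Complex.I * ((t * X m ω : ℝ) : ℂ))
      = ((c ω : ℝ) : ℂ) + ((s ω : ℝ) : ℂ) * Complex.I := by
    intro ω
    rw [mul_comm Complex.I, Complex.exp_mul_I, ← Complex.ofReal_cos, ← Complex.ofReal_sin]
  have h2 : ∀ ω, (∏ j ∈ J, Complex.exp (Complex.I * ((t * X j ω : ℝ) : ℂ)))
      = ((C ω : ℝ) : ℂ) + ((D ω : ℝ) : ℂ) * Complex.I := by
    intro ω
    rw [← Complex.exp_sum]
    have hsum : (∑ j ∈ J, Complex.I * ((t * X j ω : ℝ) : ℂ)) = ((t * S ω : ℝ) : ℂ) * Complex.I := by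
      simp only [hS, Complex.ofReal_mul, Complex.ofReal_sum]
      rw [Finset.mul_sum, Finset.sum_mul]
      exact Finset.sum_congr rfl fun j _ => by ring
    rw [hsum, Complex.exp_mul_I, ← Complex.ofReal_cos, ← Complex.ofReal_sin]
  -- integrability
  have i_c : Integrable (fun ω => ((c ω : ℝ) : ℂ)) μ := (integrable_of_bdd hmc bc).ofReal
  have i_sI : Integrable (fun ω => ((s ω : ℝ) : ℂ) * Complex.I) μ :=
    ((integrable_of_bdd hms bs).ofReal).mul_const _
  have i_C : Integrable (fun ω => ((C ω : ℝ) : ℂ)) μ := (integrable_of_bdd hmC bC).ofReal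
  have i_DI : Integrable (fun ω => ((D ω : ℝ) : ℂ) * Complex.I) μ :=
    ((integrable_of_bdd hmD bD).ofReal).mul_const _
  have icC : Integrable (fun ω => c ω * C ω) μ :=
    integrable_of_bdd (hmc.mul hmC) fun ω => by
      rw [abs_mul]
      exact mul_le_one₀ (bc ω) (abs_nonneg _) (bC ω)
  have isD : Integrable (fun ω => s ω * D ω) μ :=
    integrable_of_bdd (hms.mul hmD) fun ω => by
      rw [abs_mul]; exact mul_le_one₀ (bs ω) (abs_nonneg _) (bD ω)
  have icD : Integrable (fun ω => c ω * D ω) μ :=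
    integrable_of_bdd (hmc.mul hmD) fun ω => by
      rw [abs_mul]; exact mul_le_one₀ (bc ω) (abs_nonneg _) (bD ω)
  have isC : Integrable (fun ω => s ω * C ω) μ :=
    integrable_of_bdd (hms.mul hmC) fun ω => by
      rw [abs_mul]; exact mul_le_one₀ (bs ω) (abs_nonneg _) (bC ω)
  -- compute the integrals
  have if1 : (∫ ω, Complex.exp (Complex.I * ((t * X m ω : ℝ) : ℂ)) ∂μ)
      = ((∫ ω, c ω ∂μ : ℝ) : ℂ) + ((∫ ω, s ω ∂μ : ℝ) : ℂ) * Complex.I := by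
    simp only [h1]
    rw [integral_add i_c i_sI, integral_mul_const, integral_complex_ofReal, integral_complex_ofReal]
  have if2 : (∫ ω, ∏ j ∈ J, Complex.exp (Complex.I * ((t * X j ω : ℝ) : ℂ)) ∂μ)
      = ((∫ ω, C ω ∂μ : ℝ) : ℂ) + ((∫ ω, D ω ∂μ : ℝ) : ℂ) * Complex.I := by
    simp only [h2]
    rw [integral_add i_C i_DI, integral_mul_const, integral_complex_ofReal, integral_complex_ofReal]
  have if3 : (∫ ω, Complex.exp (Complex.I * ((t * X m ω : ℝ) : ℂ))
        * ∏ j ∈ J, Complex.exp (Complex.I * ((t * X j ω : ℝ) : ℂ)) ∂μ)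
      = ((∫ ω, (c ω * C ω - s ω * D ω) ∂μ : ℝ) : ℂ)
        + ((∫ ω, (c ω * D ω + s ω * C ω) ∂μ : ℝ) : ℂ) * Complex.I := by
    have : ∀ ω, Complex.exp (Complex.I * ((t * X m ω : ℝ) : ℂ))
        * ∏ j ∈ J, Complex.exp (Complex.I * ((t * X j ω : ℝ) : ℂ))
        = (((c ω * C ω - s ω * D ω : ℝ)) : ℂ)
          + (((c ω * D ω + s ω * C ω : ℝ)) : ℂ) * Complex.I := by
      intro ω
      rw [h1 ω, h2 ω]
      push_cast
      linear_combination ((s ω : ℂ) * (D ω : ℂ)) * Complex.I_sq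
    simp only [this]
    have i_a : Integrable (fun ω => ((c ω * C ω - s ω * D ω : ℝ) : ℂ)) μ :=
      (icC.sub isD).ofReal
    have i_b : Integrable (fun ω => ((c ω * D ω + s ω * C ω : ℝ) : ℂ) * Complex.I) μ :=
      ((icD.add isC).ofReal).mul_const _
    rw [integral_add i_a i_b, integral_mul_const, integral_complex_ofReal, integral_complex_ofReal]
  -- express the covariance
  have hcovEq : (∫ ω, Complex.exp (Complex.I * ((t * X m ω : ℝ) : ℂ))
        * ∏ j ∈ J, Complex.exp (Complex.I * ((t * X j ω : ℝ) : ℂ)) ∂μ)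
      - (∫ ω, Complex.exp (Complex.I * ((t * X m ω : ℝ) : ℂ)) ∂μ)
          * (∫ ω, ∏ j ∈ J, Complex.exp (Complex.I * ((t * X j ω : ℝ) : ℂ)) ∂μ)
      = (((cov μ c C - cov μ s D : ℝ)) : ℂ)
        + (((cov μ c D + cov μ s C : ℝ)) : ℂ) * Complex.I := by
    rw [if1, if2, if3]
    simp only [cov]
    rw [integral_sub icC isD, integral_add icD isC]
    push_cast
    linear_combination (-( (∫ ω, s ω ∂μ : ℝ) * ((∫ ω, D ω ∂μ : ℝ)) : ℂ)) * Complex.I_sq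
  rw [hcovEq]
  -- bound each real covariance by hdep
  have hdisj : Disjoint ({m} : Finset (Fin n)) J := Finset.disjoint_singleton_left.mpr hmJ
  have key : ∀ (F G : ℝ → ℝ), (∀ a b, |F a - F b| ≤ |a - b|) → (∀ a b, |G a - G b| ≤ |a - b|) →
      |cov μ (fun ω => F (t * X m ω)) (fun ω => G (t * S ω))|
        ≤ t ^ 2 * ∑ j ∈ J, γ (((j : ℤ) - (m : ℤ)).natAbs) := by
    intro F G hF hG
    have := hdep {m} J hdisj (fun x => F (t * x m)) (fun x => G (t * ∑ j ∈ J, x j)) |t| |t|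
      (fun x y => by
        rw [Finset.sum_singleton]
        calc |F (t * x m) - F (t * y m)| ≤ |t * x m - t * y m| := hF _ _
          _ = |t| * |x m - y m| := by rw [← mul_sub, abs_mul]
        )
      (fun x y => by
        calc |G (t * ∑ j ∈ J, x j) - G (t * ∑ j ∈ J, y j)|
            ≤ |t * ∑ j ∈ J, x j - t * ∑ j ∈ J, y j| := hG _ _
          _ = |t| * |∑ j ∈ J, (x j - y j)| := by
              rw [← mul_sub, abs_mul, ← Finset.sum_sub_distrib]
          _ ≤ |t| * ∑ j ∈ J, |x j - y j| :=
              mul_le_mul_of_nonneg_left (Finset.abs_sum_le_sum_abs _ _) (abs_nonneg t)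
        )
    rw [Finset.sum_singleton] at this
    calc |cov μ (fun ω => F (t * X m ω)) (fun ω => G (t * S ω))|
        ≤ |t| * |t| * ∑ j ∈ J, γ (((j : ℤ) - (m : ℤ)).natAbs) := this
      _ = t ^ 2 * ∑ j ∈ J, γ (((j : ℤ) - (m : ℤ)).natAbs) := by
          rw [abs_mul_abs_self, ← pow_two]
  have b1 : |cov μ c C| ≤ t ^ 2 * ∑ j ∈ J, γ (((j : ℤ) - (m : ℤ)).natAbs) :=
    key Real.cos Real.cos abs_cos_sub_cos_le abs_cos_sub_cos_le
  have b2 : |cov μ s D| ≤ t ^ 2 * ∑ j ∈ J, γ (((j : ℤ) - (m : ℤ)).natAbs) :=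
    key Real.sin Real.sin abs_sin_sub_sin_le abs_sin_sub_sin_le
  have b3 : |cov μ c D| ≤ t ^ 2 * ∑ j ∈ J, γ (((j : ℤ) - (m : ℤ)).natAbs) :=
    key Real.cos Real.sin abs_cos_sub_cos_le abs_sin_sub_sin_le
  have b4 : |cov μ s C| ≤ t ^ 2 * ∑ j ∈ J, γ (((j : ℤ) - (m : ℤ)).natAbs) :=
    key Real.sin Real.cos abs_sin_sub_sin_le abs_cos_sub_cos_le
  calc ‖(((cov μ c C - cov μ s D : ℝ)) : ℂ)
        + (((cov μ c D + cov μ s C : ℝ)) : ℂ) * Complex.I‖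
      ≤ |((((cov μ c C - cov μ s D : ℝ)) : ℂ)
        + (((cov μ c D + cov μ s C : ℝ)) : ℂ) * Complex.I).re|
        + |((((cov μ c C - cov μ s D : ℝ)) : ℂ)
        + (((cov μ c D + cov μ s C : ℝ)) : ℂ) * Complex.I).im| :=
        Complex.norm_le_abs_re_add_abs_im _
    _ = |cov μ c C - cov μ s D| + |cov μ c D + cov μ s C| := by
        simp [Complex.add_re, Complex.add_im, Complex.ofReal_re, Complex.ofReal_im,
          Complex.mul_re, Complex.mul_im, Complex.I_re, Complex.I_im]
    _ ≤ (|cov μ c C| + |cov μ s D|) + (|cov μ c D| + |cov μ s C|) :=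
        add_le_add (abs_sub _ _) (abs_add_le _ _)
    _ ≤ 4 * t ^ 2 * ∑ j ∈ J, γ (((j : ℤ) - (m : ℤ)).natAbs) := by
        have := add_le_add (add_le_add b1 b2) (add_le_add b3 b4)
        linarith

lemma shift {n : ℕ} {X : Fin (n + 1) → Ω → ℝ} {γ : ℕ → ℝ}
    (h : LWeakDepFin μ X γ) : LWeakDepFin μ (fun j => X j.succ) γ := by
  intro I J hIJ f g Lf Lg hf hg
  have hres := h (I.map (Fin.succEmb n)) (J.map (Fin.succEmb n))
    ((Finset.disjoint_map _).mpr hIJ)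
    (fun x => f (fun i => x i.succ)) (fun x => g (fun j => x j.succ)) Lf Lg
    (fun x y => by
      rw [Finset.sum_map]
      exact hf (fun i => x i.succ) (fun i => y i.succ))
    (fun x y => by
      rw [Finset.sum_map]
      exact hg (fun j => x j.succ) (fun j => y j.succ))
  rw [Finset.sum_map] at hres
  convert hres using 3 with i hi
  rw [Finset.sum_map]
  refine Finset.sum_congr rfl fun j hj => ?_
  congr 1
  simp only [Fin.succEmb, Function.Embedding.coeFn_mk, Fin.val_succ]
  omega

lemma key_lemma [IsProbabilityMeasure μ] (γ : ℕ → ℝ) (t : ℝ) :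
    ∀ (n : ℕ) (X : Fin n → Ω → ℝ), (∀ j, Measurable (X j)) → LWeakDepFin μ X γ →
    ‖(∫ ω, ∏ j, Complex.exp (Complex.I * ((t * X j ω : ℝ) : ℂ)) ∂μ)
        - ∏ j, ∫ ω, Complex.exp (Complex.I * ((t * X j ω : ℝ) : ℂ)) ∂μ‖
      ≤ 4 * t ^ 2 * ∑ m : Fin n, ∑ j ∈ Finset.Ioi m, γ (((j : ℤ) - (m : ℤ)).natAbs) := by
  intro n
  induction n with
  | zero =>
    intro X _ _
    simp
  | succ n ih =>
    intro X hmeas hdep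
    set φ : Fin (n + 1) → Ω → ℂ := fun j ω => Complex.exp (Complex.I * ((t * X j ω : ℝ) : ℂ))
      with hφ
    have habs1 : ∀ j ω, ‖φ j ω‖ = 1 := by
      intro j ω
      simp only [hφ, mul_comm Complex.I]
      exact Complex.norm_exp_ofReal_mul_I _
    -- decomposition
    have hx : ‖∫ ω, φ 0 ω ∂μ‖ ≤ 1 := by
      calc ‖∫ ω, φ 0 ω ∂μ‖ = ‖∫ ω, φ 0 ω ∂μ‖ := rfl
      _ ≤ ∫ ω, ‖φ 0 ω‖ ∂μ := norm_integral_le_integral_norm _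
      _ = 1 := by simp [habs1]
    have hprod : ∀ ω, (∏ j, φ j ω) = φ 0 ω * ∏ j ∈ Finset.Ioi (0 : Fin (n + 1)), φ j ω := by
      intro ω
      rw [Fin.prod_univ_succ, Fin.prod_Ioi_zero]
    have hprodE : (∏ j, ∫ ω, φ j ω ∂μ)
        = (∫ ω, φ 0 ω ∂μ) * ∏ j : Fin n, ∫ ω, φ j.succ ω ∂μ := Fin.prod_univ_succ _
    set a := ∫ ω, ∏ j, φ j ω ∂μ with ha
    set x := ∫ ω, φ 0 ω ∂μ with hxdef
    set y := ∫ ω, ∏ j ∈ Finset.Ioi (0 : Fin (n + 1)), φ j ω ∂μ with hy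
    set p := ∏ j : Fin n, ∫ ω, φ j.succ ω ∂μ with hp
    have hsplit : a - ∏ j, ∫ ω, φ j ω ∂μ = (a - x * y) + x * (y - p) := by
      rw [hprodE]; ring
    have term1 : ‖a - x * y‖
        ≤ 4 * t ^ 2 * ∑ j ∈ Finset.Ioi (0 : Fin (n + 1)),
            γ (((j : ℤ) - ((0 : Fin (n + 1)) : ℤ)).natAbs) := by
      have := covC_bound X hmeas γ hdep t 0 (Finset.Ioi 0) (by simp)
      have ha' : a = ∫ ω, φ 0 ω * ∏ j ∈ Finset.Ioi (0 : Fin (n + 1)), φ j ω ∂μ := by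
        rw [ha]
        exact integral_congr_ae (Eventually.of_forall fun ω => by
          simpa using hprod ω)
      rw [ha']
      exact this
    have term2 : ‖y - p‖
        ≤ 4 * t ^ 2 * ∑ m : Fin n, ∑ j ∈ Finset.Ioi m, γ (((j : ℤ) - (m : ℤ)).natAbs) := by
      have hy' : y = ∫ ω, ∏ j : Fin n, φ j.succ ω ∂μ := by
        rw [hy]
        exact integral_congr_ae (Eventually.of_forall fun ω => by
          simp only [Fin.prod_Ioi_zero])
      rw [hy', hp]
      exact ih (fun j => X j.succ) (fun j => hmeas j.succ) (shift hdep)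
    calc ‖a - ∏ j, ∫ ω, φ j ω ∂μ‖
        = ‖(a - x * y) + x * (y - p)‖ := by rw [hsplit]
      _ ≤ ‖a - x * y‖ + ‖x * (y - p)‖ := norm_add_le _ _
      _ = ‖a - x * y‖ + ‖x‖ * ‖y - p‖ := by
          rw [norm_mul]
      _ ≤ (4 * t ^ 2 * ∑ j ∈ Finset.Ioi (0 : Fin (n + 1)),
            γ (((j : ℤ) - ((0 : Fin (n + 1)) : ℤ)).natAbs))
          + 1 * (4 * t ^ 2 * ∑ m : Fin n, ∑ j ∈ Finset.Ioi m,
            γ (((j : ℤ) - (m : ℤ)).natAbs)) := by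
          gcongr
      _ = 4 * t ^ 2 * ∑ m : Fin (n + 1), ∑ j ∈ Finset.Ioi m,
            γ (((j : ℤ) - (m : ℤ)).natAbs) := by
          rw [Fin.sum_univ_succ]
          have hinner : ∀ m : Fin n, (∑ j ∈ Finset.Ioi m.succ,
              γ (((j : ℤ) - ((m.succ : Fin (n + 1)) : ℤ)).natAbs))
              = ∑ j ∈ Finset.Ioi m, γ (((j : ℤ) - (m : ℤ)).natAbs) := by
            intro m
            rw [Fin.sum_Ioi_succ]
            refine Finset.sum_congr rfl fun j hj => ?_
            congr 1
            simp only [Fin.val_succ]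
            omega
          simp only [hinner]
          ring
  
lemma count_sum (γ : ℕ → ℝ) :
    ∀ n : ℕ, (∑ m : Fin n, ∑ j ∈ Finset.Ioi m, γ (((j : ℤ) - (m : ℤ)).natAbs))
      = ∑ k ∈ Finset.Ico 1 n, ((n : ℝ) - (k : ℝ)) * γ k := by
  intro n
  induction n with
  | zero => simp
  | succ n ih =>
    rw [Fin.sum_univ_succ]
    have hinner : ∀ m : Fin n, (∑ j ∈ Finset.Ioi m.succ,
        γ (((j : ℤ) - ((m.succ : Fin (n + 1)) : ℤ)).natAbs))
        = ∑ j ∈ Finset.Ioi m, γ (((j : ℤ) - (m : ℤ)).natAbs) := by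
      intro m
      rw [Fin.sum_Ioi_succ]
      refine Finset.sum_congr rfl fun j hj => ?_
      congr 1
      simp only [Fin.val_succ]
      omega
    simp only [hinner]
    rw [ih]
    have hfirst : (∑ j ∈ Finset.Ioi (0 : Fin (n + 1)),
        γ (((j : ℤ) - ((0 : Fin (n + 1)) : ℤ)).natAbs)) = ∑ k ∈ Finset.Ico 1 (n + 1), γ k := by
      rw [Fin.sum_Ioi_zero, Finset.sum_Ico_eq_sum_range]
      simp only [Nat.add_sub_cancel]
      have hterm : ∀ j : Fin n, γ (((j.succ : ℤ) - ((0 : Fin (n + 1)) : ℤ)).natAbs) = γ (1 + (j : ℕ)) := by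
        intro j
        congr 1
        simp only [Fin.val_succ, Fin.val_zero]
        omega
      simp only [hterm]
      exact Fin.sum_univ_eq_sum_range (fun k => γ (1 + k)) n
    rw [hfirst]
    -- now: ∑_{Ico 1 (n+1)} γ k + ∑_{Ico 1 n} (n - k) γ k = ∑_{Ico 1 (n+1)} (n+1-k) γ k
    rcases Nat.eq_zero_or_pos n with hn | hn
    · subst hn; simp
    have hsplit2 : (∑ k ∈ Finset.Ico 1 (n + 1), (((n : ℝ) + 1) - (k : ℝ)) * γ k)
        = (∑ k ∈ Finset.Ico 1 (n + 1), γ k)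
          + ∑ k ∈ Finset.Ico 1 (n + 1), ((n : ℝ) - (k : ℝ)) * γ k := by
      rw [← Finset.sum_add_distrib]
      exact Finset.sum_congr rfl fun k hk => by ring
    have htop : (∑ k ∈ Finset.Ico 1 (n + 1), ((n : ℝ) - (k : ℝ)) * γ k)
        = ∑ k ∈ Finset.Ico 1 n, ((n : ℝ) - (k : ℝ)) * γ k := by
      rw [Finset.sum_Ico_succ_top hn]
      simp
    push_cast
    rw [hsplit2, htop]

end Stmt6Aux

theorem stmt6 {Ω : Type*} [MeasurableSpace Ω] (μ : Measure Ω) [IsProbabilityMeasure μ]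
    {n : ℕ} (X : Fin n → Ω → ℝ) (hmeas : ∀ j, Measurable (X j))
    (γ : ℕ → ℝ) (hγ : ∀ k, 0 ≤ γ k)
    (hdep : LWeakDepFin μ X γ) (t : ℝ) :
    ‖(∫ ω, ∏ j, Complex.exp (Complex.I * ((t * X j ω : ℝ) : ℂ)) ∂μ)
        - ∏ j, ∫ ω, Complex.exp (Complex.I * ((t * X j ω : ℝ) : ℂ)) ∂μ‖
      ≤ 4 * t ^ 2 * ∑ j ∈ Finset.Ico 1 n, ((n : ℝ) - (j : ℝ)) * γ j := by
  have h := Stmt6Aux.key_lemma γ t n X hmeas hdep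
  rwa [Stmt6Aux.count_sum γ n] at h
end

section
/- Let $X_i$ be centered random variables with $\mathbb{E}|X_1|^{4+\delta} < \infty$ for some $\delta > 0$, stationary and L-weakly dependent with decreasing coefficients $(\gamma_k)$. For indices $1 \leq i \leq j < k \leq \ell$, one has $|\mathrm{Cov}(X_iX_j, X_kX_\ell)| \leq C\,\gamma_{k-j}^{\delta/(4+\delta)}$ for a constant $C$ depending only on the distribution of $X_1$. In particular, if $\gamma_k = O(k^{-2-8/\delta})$, then $\mathrm{Cov}(X_iX_j, X_kX_\ell) = O((k-j)^{-2})$. -/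
open MeasureTheory ProbabilityTheory Filter

/-- L-weak dependence of a sequence `X : ℕ → Ω → ℝ` with coefficients `γ`. -/
def LWeakDepNat {Ω : Type*} [MeasurableSpace Ω] (μ : Measure Ω)
    (X : ℕ → Ω → ℝ) (γ : ℕ → ℝ) : Prop :=
  ∀ (I J : Finset ℕ), Disjoint I J →
    ∀ (f g : (ℕ → ℝ) → ℝ) (Lf Lg : ℝ),
      (∀ x y, |f x - f y| ≤ Lf * ∑ i ∈ I, |x i - y i|) →
      (∀ x y, |g x - g y| ≤ Lg * ∑ j ∈ J, |x j - y j|) →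
      |cov μ (fun ω => f (fun i => X i ω)) (fun ω => g (fun i => X i ω))|
        ≤ Lf * Lg * ∑ i ∈ I, ∑ j ∈ J, γ (((j : ℤ) - (i : ℤ)).natAbs)

noncomputable def trunc (c x : ℝ) : ℝ := max (min x c) (-c)

lemma trunc_abs_le {c : ℝ} (hc : 0 ≤ c) (x : ℝ) : |trunc c x| ≤ c := by
  rw [abs_le]; constructor
  · exact le_max_right _ _
  · exact max_le ((min_le_right _ _)) (by linarith)

lemma abs_trunc_le_abs {c : ℝ} (hc : 0 ≤ c) (x : ℝ) : |trunc c x| ≤ |x| := by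
  unfold trunc
  rcases le_total x c with h | h
  · rw [min_eq_left h]
    rcases le_total (-c) x with h' | h'
    · rw [max_eq_left h']
    · rw [max_eq_right h']
      rw [abs_le]; constructor
      · rcases abs_cases x with ⟨hx, _⟩ | ⟨hx, _⟩ <;> linarith
      · rcases abs_cases x with ⟨hx, _⟩ | ⟨hx, _⟩ <;> linarith
  · rw [min_eq_right h]
    rw [max_eq_left (by linarith)]
    rw [abs_le]; constructor
    · rcases abs_cases x with ⟨hx, _⟩ | ⟨hx, _⟩ <;> linarith
    · rcases abs_cases x with ⟨hx, _⟩ | ⟨hx, _⟩ <;> linarith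

lemma trunc_lip (c x y : ℝ) : |trunc c x - trunc c y| ≤ |x - y| := by
  unfold trunc
  calc |max (min x c) (-c) - max (min y c) (-c)| ≤ |min x c - min y c| :=
        abs_max_sub_max_le_abs _ _ _
    _ ≤ max |x - y| |c - c| := abs_min_sub_min_le_max _ _ _ _
    _ ≤ |x - y| := by simp

lemma trunc_eq_self {c x : ℝ} (h : |x| ≤ c) : trunc c x = x := by
  rw [abs_le] at h
  unfold trunc
  rw [min_eq_left h.2, max_eq_left h.1]

lemma abs_sub_trunc_le_rpow {c : ℝ} (hc : 0 < c) {e : ℝ} (he : 0 ≤ e) (x : ℝ) :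
    |x - trunc c x| ≤ |x| ^ (1 + e) / c ^ e := by
  rcases le_or_gt |x| c with h | h
  · rw [trunc_eq_self h, sub_self, abs_zero]
    positivity
  · have hx0 : 0 < |x| := lt_trans hc h
    have h1 : |x - trunc c x| ≤ |x| := by
      unfold trunc
      rcases abs_cases x with ⟨hx, hx'⟩ | ⟨hx, hx'⟩
      · rw [min_eq_right (by linarith), max_eq_left (by linarith)]
        rw [abs_of_nonneg (by linarith)]; rw [abs_of_nonneg hx'] ; linarith
      · rw [min_eq_left (by linarith), max_eq_right (by linarith)]
        rw [abs_of_nonpos (by linarith)]; linarith [abs_nonneg x]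
    refine h1.trans ?_
    rw [le_div_iff₀ (by positivity)]
    calc |x| * c ^ e ≤ |x| * |x| ^ e :=
          mul_le_mul_of_nonneg_left (Real.rpow_le_rpow hc.le h.le he) hx0.le
      _ = |x| ^ (1 + e) := by
          rw [Real.rpow_add hx0, Real.rpow_one]

lemma rpow_le_one_add_rpow {a s q : ℝ} (ha : 0 ≤ a) (hs : 0 ≤ s) (hsq : s ≤ q) :
    a ^ s ≤ 1 + a ^ q := by
  rcases le_total a 1 with h | h
  · have := Real.rpow_le_one ha h hs
    have : (0:ℝ) ≤ a ^ q := Real.rpow_nonneg ha q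
    linarith [Real.rpow_le_one ha (by assumption) hs]
  · have := Real.rpow_le_rpow_of_exponent_le h hsq
    linarith

lemma amgm4R {q : ℝ} (hq : 0 < q) {e1 e2 e3 e4 a b c d : ℝ}
    (h1 : 0 ≤ e1) (h2 : 0 ≤ e2) (h3 : 0 ≤ e3) (h4 : 0 ≤ e4)
    (he : e1 + e2 + e3 + e4 = q)
    (ha : 0 ≤ a) (hb : 0 ≤ b) (hc : 0 ≤ c) (hd : 0 ≤ d) :
    a ^ e1 * b ^ e2 * c ^ e3 * d ^ e4
      ≤ (e1 * a ^ q + e2 * b ^ q + e3 * c ^ q + e4 * d ^ q) / q := by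
  have hqne : q ≠ 0 := ne_of_gt hq
  have key := Real.geom_mean_le_arith_mean4_weighted
    (div_nonneg h1 hq.le) (div_nonneg h2 hq.le) (div_nonneg h3 hq.le) (div_nonneg h4 hq.le)
    (Real.rpow_nonneg ha q) (Real.rpow_nonneg hb q) (Real.rpow_nonneg hc q)
    (Real.rpow_nonneg hd q) (by field_simp; linarith)
  have ea : (a ^ q) ^ (e1 / q) = a ^ e1 := by
    rw [← Real.rpow_mul ha]; congr 1; field_simp
  have eb : (b ^ q) ^ (e2 / q) = b ^ e2 := by
    rw [← Real.rpow_mul hb]; congr 1; field_simp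
  have ec : (c ^ q) ^ (e3 / q) = c ^ e3 := by
    rw [← Real.rpow_mul hc]; congr 1; field_simp
  have ed : (d ^ q) ^ (e4 / q) = d ^ e4 := by
    rw [← Real.rpow_mul hd]; congr 1; field_simp
  rw [ea, eb, ec, ed] at key
  calc a ^ e1 * b ^ e2 * c ^ e3 * d ^ e4
      ≤ e1 / q * a ^ q + e2 / q * b ^ q + e3 / q * c ^ q + e4 / q * d ^ q := key
    _ = (e1 * a ^ q + e2 * b ^ q + e3 * c ^ q + e4 * d ^ q) / q := by ring

lemma amgm2R {q : ℝ} (hq : 0 < q) {e1 e2 a b : ℝ}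
    (h1 : 0 ≤ e1) (h2 : 0 ≤ e2) (he : e1 + e2 = q) (ha : 0 ≤ a) (hb : 0 ≤ b) :
    a ^ e1 * b ^ e2 ≤ (e1 * a ^ q + e2 * b ^ q) / q := by
  have key := Real.geom_mean_le_arith_mean2_weighted
    (div_nonneg h1 hq.le) (div_nonneg h2 hq.le)
    (Real.rpow_nonneg ha q) (Real.rpow_nonneg hb q) (by field_simp; linarith)
  have ea : (a ^ q) ^ (e1 / q) = a ^ e1 := by
    rw [← Real.rpow_mul ha]; congr 1; field_simp
  have eb : (b ^ q) ^ (e2 / q) = b ^ e2 := by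
    rw [← Real.rpow_mul hb]; congr 1; field_simp
  rw [ea, eb] at key
  calc a ^ e1 * b ^ e2 ≤ e1 / q * a ^ q + e2 / q * b ^ q := key
    _ = (e1 * a ^ q + e2 * b ^ q) / q := by ring

lemma bd4 {δ a b c d : ℝ} (hδ : 0 < δ) (ha : 0 ≤ a) (hb : 0 ≤ b) (hc : 0 ≤ c) (hd : 0 ≤ d) :
    a ^ (1+δ) * b * c * d ≤ a ^ (4+δ) + b ^ (4+δ) + c ^ (4+δ) + d ^ (4+δ) := by
  have hq : (0:ℝ) < 4 + δ := by linarith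
  have key := amgm4R hq (by linarith : (0:ℝ) ≤ 1+δ) (by norm_num : (0:ℝ) ≤ 1)
    (by norm_num : (0:ℝ) ≤ 1) (by norm_num : (0:ℝ) ≤ 1) (by ring) ha hb hc hd
  rw [Real.rpow_one, Real.rpow_one, Real.rpow_one] at key
  refine key.trans ?_
  rw [div_le_iff₀ hq]
  have hA := Real.rpow_nonneg ha (4+δ)
  have hB := Real.rpow_nonneg hb (4+δ)
  have hC := Real.rpow_nonneg hc (4+δ)
  have hD := Real.rpow_nonneg hd (4+δ)
  nlinarith [mul_nonneg hA hδ.le, mul_nonneg hB hδ.le, mul_nonneg hC hδ.le, mul_nonneg hD hδ.le]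

lemma bd2 {δ a b : ℝ} (hδ : 0 < δ) (ha : 0 ≤ a) (hb : 0 ≤ b) :
    a ^ (3+δ) * b ≤ a ^ (4+δ) + b ^ (4+δ) := by
  have hq : (0:ℝ) < 4 + δ := by linarith
  have key := amgm2R hq (by linarith : (0:ℝ) ≤ 3+δ) (by norm_num : (0:ℝ) ≤ 1) (by ring) ha hb
  rw [Real.rpow_one] at key
  refine key.trans ?_
  rw [div_le_iff₀ hq]
  have hA := Real.rpow_nonneg ha (4+δ)
  have hB := Real.rpow_nonneg hb (4+δ)
  nlinarith [mul_nonneg hA hδ.le, mul_nonneg hB hδ.le]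

lemma bd2' {δ a b : ℝ} (hδ : 0 < δ) (ha : 0 ≤ a) (hb : 0 ≤ b) :
    a ^ (1+δ) * b ≤ 2 + a ^ (4+δ) + b ^ (4+δ) := by
  have hq : (0:ℝ) < 2 + δ := by linarith
  have key := amgm2R hq (by linarith : (0:ℝ) ≤ 1+δ) (by norm_num : (0:ℝ) ≤ 1) (by ring) ha hb
  rw [Real.rpow_one] at key
  refine key.trans ?_
  have h1 : a ^ (2+δ) ≤ 1 + a ^ (4+δ) := rpow_le_one_add_rpow ha (by linarith) (by linarith)
  have h2 : b ^ (2+δ) ≤ 1 + b ^ (4+δ) := rpow_le_one_add_rpow hb (by linarith) (by linarith)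
  have hA := Real.rpow_nonneg ha (2+δ)
  have hB := Real.rpow_nonneg hb (2+δ)
  rw [div_le_iff₀ hq]
  nlinarith [mul_nonneg hA hδ.le, mul_nonneg hB hδ.le]

lemma bdprod2 {δ a b : ℝ} (hδ : 0 < δ) (ha : 0 ≤ a) (hb : 0 ≤ b) :
    a * b ≤ 2 + a ^ (4+δ) + b ^ (4+δ) := by
  have h1 : a ^ (2:ℕ) ≤ 1 + a ^ (4+δ) := by
    have h := rpow_le_one_add_rpow (q := 4+δ) ha (by positivity : (0:ℝ) ≤ ((2:ℕ):ℝ)) (by push_cast; linarith)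
    rwa [Real.rpow_natCast] at h
  have h2 : b ^ (2:ℕ) ≤ 1 + b ^ (4+δ) := by
    have h := rpow_le_one_add_rpow (q := 4+δ) hb (by positivity : (0:ℝ) ≤ ((2:ℕ):ℝ)) (by push_cast; linarith)
    rwa [Real.rpow_natCast] at h
  nlinarith

lemma bdprod4 {δ a b c d : ℝ} (hδ : 0 < δ) (ha : 0 ≤ a) (hb : 0 ≤ b) (hc : 0 ≤ c) (hd : 0 ≤ d) :
    a * b * c * d ≤ 4 + a ^ (4+δ) + b ^ (4+δ) + c ^ (4+δ) + d ^ (4+δ) := by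
  have key4 : ∀ x : ℝ, 0 ≤ x → x ^ (4:ℕ) ≤ 1 + x ^ (4+δ) := by
    intro x hx
    have h := rpow_le_one_add_rpow (q := 4+δ) hx (by positivity : (0:ℝ) ≤ ((4:ℕ):ℝ)) (by push_cast; linarith)
    rwa [Real.rpow_natCast] at h
  have h1 := key4 a ha
  have h2 := key4 b hb
  have h3 := key4 c hc
  have h4 := key4 d hd
  have key : a * b * c * d ≤ (a^4 + b^4 + c^4 + d^4) / 4 := by
    nlinarith [sq_nonneg (a*b - c*d), sq_nonneg (a - b), sq_nonneg (c - d), sq_nonneg (a+b),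
      sq_nonneg (c+d), mul_nonneg ha hb, mul_nonneg hc hd, sq_nonneg (a^2 - b^2),
      sq_nonneg (c^2 - d^2)]
  nlinarith [Real.rpow_nonneg ha (4+δ), Real.rpow_nonneg hb (4+δ), Real.rpow_nonneg hc (4+δ),
    Real.rpow_nonneg hd (4+δ)]

lemma hstep1R {δ c a b : ℝ} (hδ : 0 < δ) (hc : 0 < c) :
    |a * b - trunc c a * trunc c b|
      ≤ (|a| * |b| ^ (1+δ) + |b| * |a| ^ (1+δ)) / c ^ δ := by
  have e1 : a * b - trunc c a * trunc c b
      = a * (b - trunc c b) + trunc c b * (a - trunc c a) := by ring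
  rw [e1]
  calc |a * (b - trunc c b) + trunc c b * (a - trunc c a)|
      ≤ |a * (b - trunc c b)| + |trunc c b * (a - trunc c a)| := abs_add_le _ _
    _ = |a| * |b - trunc c b| + |trunc c b| * |a - trunc c a| := by rw [abs_mul, abs_mul]
    _ ≤ |a| * (|b| ^ (1+δ) / c ^ δ) + |b| * (|a| ^ (1+δ) / c ^ δ) := by
        refine add_le_add ?_ ?_
        · exact mul_le_mul_of_nonneg_left (abs_sub_trunc_le_rpow hc hδ.le b) (abs_nonneg a)
        · exact mul_le_mul (abs_trunc_le_abs hc.le b) (abs_sub_trunc_le_rpow hc hδ.le a)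
            (abs_nonneg _) (abs_nonneg _)
    _ = (|a| * |b| ^ (1+δ) + |b| * |a| ^ (1+δ)) / c ^ δ := by ring

lemma hstep3R {δ c a b : ℝ} (hδ : 0 < δ) (hc : 0 < c) :
    |a * b - trunc c a * trunc c b|
      ≤ (|a| * |b| ^ (3+δ) + |b| * |a| ^ (3+δ)) / c ^ (2+δ) := by
  have h := hstep1R (δ := 2+δ) (by linarith) hc (a := a) (b := b)
  rw [show (1:ℝ)+(2+δ) = 3+δ by ring] at h
  exact h

lemma P2R {δ c a b : ℝ} (hδ : 0 < δ) (hc : 0 < c) :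
    |a * b - trunc c a * trunc c b|
      ≤ (4 + 2 * (|a| ^ (4+δ) + |b| ^ (4+δ))) / c ^ δ := by
  refine (hstep1R hδ hc).trans ?_
  have hcδ : 0 < c ^ δ := Real.rpow_pos_of_pos hc δ
  have h1 : |b| ^ (1+δ) * |a| ≤ 2 + |b| ^ (4+δ) + |a| ^ (4+δ) := bd2' hδ (abs_nonneg b) (abs_nonneg a)
  have h2 : |a| ^ (1+δ) * |b| ≤ 2 + |a| ^ (4+δ) + |b| ^ (4+δ) := bd2' hδ (abs_nonneg a) (abs_nonneg b)
  rw [div_le_div_iff_of_pos_right hcδ]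
  nlinarith

lemma P3R {δ c a b : ℝ} (hδ : 0 < δ) (hc : 0 < c) :
    |a * b - trunc c a * trunc c b|
      ≤ 2 * (|a| ^ (4+δ) + |b| ^ (4+δ)) / c ^ (2+δ) := by
  refine (hstep3R hδ hc).trans ?_
  have h1 : |b| ^ (3+δ) * |a| ≤ |b| ^ (4+δ) + |a| ^ (4+δ) := bd2 hδ (abs_nonneg b) (abs_nonneg a)
  have h2 : |a| ^ (3+δ) * |b| ≤ |a| ^ (4+δ) + |b| ^ (4+δ) := bd2 hδ (abs_nonneg a) (abs_nonneg b)
  have hc2 : 0 < c ^ ((2:ℝ)+δ) := Real.rpow_pos_of_pos hc _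
  rw [div_le_div_iff_of_pos_right hc2]
  nlinarith

lemma P1R {δ c a b d e : ℝ} (hδ : 0 < δ) (hc : 0 < c) :
    |a * b * (d * e) - trunc c a * trunc c b * (trunc c d * trunc c e)|
      ≤ 4 * (|a| ^ (4+δ) + |b| ^ (4+δ) + |d| ^ (4+δ) + |e| ^ (4+δ)) / c ^ δ := by
  have hcδ : 0 < c ^ δ := Real.rpow_pos_of_pos hc δ
  have hc2δ : c ^ ((2:ℝ)+δ) = c ^ 2 * c ^ δ := by
    rw [Real.rpow_add hc, Real.rpow_two]
  have hsplit : a * b * (d * e) - trunc c a * trunc c b * (trunc c d * trunc c e)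
      = (a * b - trunc c a * trunc c b) * (d * e)
        + (trunc c a * trunc c b) * (d * e - trunc c d * trunc c e) := by ring
  have h1 := hstep1R (a := a) (b := b) hδ hc
  have h2 := hstep3R (a := d) (b := e) hδ hc
  have hA' : |trunc c a * trunc c b| ≤ c * c := by
    rw [abs_mul]
    exact mul_le_mul (trunc_abs_le hc.le a) (trunc_abs_le hc.le b) (abs_nonneg _) hc.le
  have key : |a * b * (d * e) - trunc c a * trunc c b * (trunc c d * trunc c e)|
      ≤ ((|a| * |b| ^ (1+δ) + |b| * |a| ^ (1+δ)) / c ^ δ) * (|d| * |e|)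
        + (c * c) * ((|d| * |e| ^ (3+δ) + |e| * |d| ^ (3+δ)) / c ^ (2+δ)) := by
    rw [hsplit]
    calc |(a * b - trunc c a * trunc c b) * (d * e)
          + (trunc c a * trunc c b) * (d * e - trunc c d * trunc c e)|
        ≤ |a * b - trunc c a * trunc c b| * (|d| * |e|)
          + |trunc c a * trunc c b| * |d * e - trunc c d * trunc c e| := by
          refine (abs_add_le _ _).trans ?_
          rw [abs_mul, abs_mul, abs_mul]
      _ ≤ _ := by
          refine add_le_add ?_ ?_
          · exact mul_le_mul_of_nonneg_right h1 (by positivity)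
          · exact mul_le_mul hA' h2 (abs_nonneg _) (by positivity)
  refine key.trans ?_
  have e2 : (c * c) * ((|d| * |e| ^ (3+δ) + |e| * |d| ^ (3+δ)) / c ^ ((2:ℝ)+δ))
      = (|d| * |e| ^ (3+δ) + |e| * |d| ^ (3+δ)) / c ^ δ := by
    rw [hc2δ]; field_simp
  rw [e2]
  have hb1 : |b| ^ (1+δ) * |a| * |d| * |e| ≤ |b| ^ (4+δ) + |a| ^ (4+δ) + |d| ^ (4+δ) + |e| ^ (4+δ) :=
    bd4 hδ (abs_nonneg b) (abs_nonneg a) (abs_nonneg d) (abs_nonneg e)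
  have hb2 : |a| ^ (1+δ) * |b| * |d| * |e| ≤ |a| ^ (4+δ) + |b| ^ (4+δ) + |d| ^ (4+δ) + |e| ^ (4+δ) :=
    bd4 hδ (abs_nonneg a) (abs_nonneg b) (abs_nonneg d) (abs_nonneg e)
  have hb3 : |e| ^ (3+δ) * |d| ≤ |e| ^ (4+δ) + |d| ^ (4+δ) := bd2 hδ (abs_nonneg e) (abs_nonneg d)
  have hb4 : |d| ^ (3+δ) * |e| ≤ |d| ^ (4+δ) + |e| ^ (4+δ) := bd2 hδ (abs_nonneg d) (abs_nonneg e)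
  rw [div_mul_eq_mul_div, ← add_div, div_le_div_iff_of_pos_right hcδ]
  have hq1 := Real.rpow_nonneg (abs_nonneg a) (4+δ)
  have hq2 := Real.rpow_nonneg (abs_nonneg b) (4+δ)
  have hq3 := Real.rpow_nonneg (abs_nonneg d) (4+δ)
  have hq4 := Real.rpow_nonneg (abs_nonneg e) (4+δ)
  nlinarith [hcδ]

set_option maxHeartbeats 1000000 in
lemma key_bound {Ω : Type*} [MeasurableSpace Ω] (μ : Measure Ω) [IsProbabilityMeasure μ]
    (X : ℕ → Ω → ℝ) (hmeas : ∀ n, Measurable (X n))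
    (γ : ℕ → ℝ) (hγ : ∀ k, 0 ≤ γ k) (hmono : Antitone γ)
    (hdep : LWeakDepNat μ X γ)
    (δ : ℝ) (hδ : 0 < δ) (M : ℝ)
    (hintp : ∀ n, Integrable (fun ω => |X n ω| ^ (4+δ)) μ)
    (hMeq : ∀ n, ∫ ω, |X n ω| ^ (4+δ) ∂μ = M)
    (i j k l : ℕ) (hij : i ≤ j) (hjk : j < k) (hkl : k ≤ l) (c : ℝ) (hc : 0 < c) :
    |cov μ (fun ω => X i ω * X j ω) (fun ω => X k ω * X l ω)|
      ≤ 16 * c^2 * γ (k-j) + 56 * (1+M)^2 / c ^ δ := by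
  have hcδ : 0 < c ^ δ := Real.rpow_pos_of_pos hc δ
  have hc2δ : c ^ ((2:ℝ)+δ) = c ^ 2 * c ^ δ := by rw [Real.rpow_add hc, Real.rpow_two]
  have hMnn : 0 ≤ M := by
    rw [← hMeq 1]; exact integral_nonneg fun ω => Real.rpow_nonneg (abs_nonneg _) _
  set V : Ω → ℝ := fun ω =>
    |X i ω| ^ (4+δ) + |X j ω| ^ (4+δ) + |X k ω| ^ (4+δ) + |X l ω| ^ (4+δ) with hVdef
  have hVint : Integrable V μ := (((hintp i).add (hintp j)).add (hintp k)).add (hintp l)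
  have hVnn : ∀ ω, 0 ≤ V ω := fun ω => by
    have := Real.rpow_nonneg (abs_nonneg (X i ω)) (4+δ)
    have := Real.rpow_nonneg (abs_nonneg (X j ω)) (4+δ)
    have := Real.rpow_nonneg (abs_nonneg (X k ω)) (4+δ)
    have := Real.rpow_nonneg (abs_nonneg (X l ω)) (4+δ)
    simp only [hVdef]; linarith
  have hintij : Integrable (fun ω => |X i ω| ^ (4+δ) + |X j ω| ^ (4+δ)) μ :=
    (hintp i).add (hintp j)
  have hintijk : Integrable (fun ω => |X i ω| ^ (4+δ) + |X j ω| ^ (4+δ) + |X k ω| ^ (4+δ)) μ :=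
    hintij.add (hintp k)
  have hVeq : ∫ ω, V ω ∂μ = 4 * M := by
    simp only [hVdef]
    rw [integral_add hintijk (hintp l), integral_add hintij (hintp k),
        integral_add (hintp i) (hintp j), hMeq i, hMeq j, hMeq k, hMeq l]
    ring
  have hDint : Integrable (fun ω => 4 + V ω) μ := (integrable_const 4).add hVint
  have hD2int : Integrable (fun ω => 2 + V ω) μ := (integrable_const 2).add hVint
  have hTm : ∀ n, Measurable (fun ω => trunc c (X n ω)) := fun n =>
    ((measurable_id.min measurable_const).max measurable_const).comp (hmeas n)
  -- integrability
  have hAint : Integrable (fun ω => X i ω * X j ω) μ := by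
    refine Integrable.mono' hDint
      ((hmeas i).mul (hmeas j)).aestronglyMeasurable (ae_of_all _ fun ω => ?_)
    have h := bdprod2 hδ (abs_nonneg (X i ω)) (abs_nonneg (X j ω))
    have h1 := Real.rpow_nonneg (abs_nonneg (X k ω)) (4+δ)
    have h2 := Real.rpow_nonneg (abs_nonneg (X l ω)) (4+δ)
    rw [Real.norm_eq_abs, abs_mul]
    simp only [hVdef]; linarith
  have hBint : Integrable (fun ω => X k ω * X l ω) μ := by
    refine Integrable.mono' hDint
      ((hmeas k).mul (hmeas l)).aestronglyMeasurable (ae_of_all _ fun ω => ?_)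
    have h := bdprod2 hδ (abs_nonneg (X k ω)) (abs_nonneg (X l ω))
    have h1 := Real.rpow_nonneg (abs_nonneg (X i ω)) (4+δ)
    have h2 := Real.rpow_nonneg (abs_nonneg (X j ω)) (4+δ)
    rw [Real.norm_eq_abs, abs_mul]
    simp only [hVdef]; linarith
  have hABint : Integrable (fun ω => X i ω * X j ω * (X k ω * X l ω)) μ := by
    refine Integrable.mono' hDint
      (((hmeas i).mul (hmeas j)).mul ((hmeas k).mul (hmeas l))).aestronglyMeasurable
      (ae_of_all _ fun ω => ?_)
    have h := bdprod4 hδ (abs_nonneg (X i ω)) (abs_nonneg (X j ω)) (abs_nonneg (X k ω))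
      (abs_nonneg (X l ω))
    rw [Real.norm_eq_abs, abs_mul, abs_mul, abs_mul]
    simp only [hVdef]; nlinarith [abs_nonneg (X i ω), abs_nonneg (X j ω)]
  have hA'int : Integrable (fun ω => trunc c (X i ω) * trunc c (X j ω)) μ := by
    refine Integrable.mono' (integrable_const (c * c))
      ((hTm i).mul (hTm j)).aestronglyMeasurable (ae_of_all _ fun ω => ?_)
    rw [Real.norm_eq_abs, abs_mul]
    exact mul_le_mul (trunc_abs_le hc.le _) (trunc_abs_le hc.le _) (abs_nonneg _) hc.le
  have hB'int : Integrable (fun ω => trunc c (X k ω) * trunc c (X l ω)) μ := by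
    refine Integrable.mono' (integrable_const (c * c))
      ((hTm k).mul (hTm l)).aestronglyMeasurable (ae_of_all _ fun ω => ?_)
    rw [Real.norm_eq_abs, abs_mul]
    exact mul_le_mul (trunc_abs_le hc.le _) (trunc_abs_le hc.le _) (abs_nonneg _) hc.le
  have hA'B'int : Integrable
      (fun ω => trunc c (X i ω) * trunc c (X j ω) * (trunc c (X k ω) * trunc c (X l ω))) μ := by
    refine Integrable.mono' (integrable_const ((c * c) * (c * c)))
      (((hTm i).mul (hTm j)).mul ((hTm k).mul (hTm l))).aestronglyMeasurable
      (ae_of_all _ fun ω => ?_)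
    rw [Real.norm_eq_abs, abs_mul, abs_mul, abs_mul]
    have h1 : |trunc c (X i ω)| * |trunc c (X j ω)| ≤ c * c :=
      mul_le_mul (trunc_abs_le hc.le _) (trunc_abs_le hc.le _) (abs_nonneg _) hc.le
    have h2 : |trunc c (X k ω)| * |trunc c (X l ω)| ≤ c * c :=
      mul_le_mul (trunc_abs_le hc.le _) (trunc_abs_le hc.le _) (abs_nonneg _) hc.le
    exact mul_le_mul h1 h2 (mul_nonneg (abs_nonneg _) (abs_nonneg _)) (by positivity)
  -- generic integral estimates
  have habs_int_le : ∀ (f g : Ω → ℝ), Integrable f μ → Integrable g μ → (∀ ω, |f ω| ≤ g ω) →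
      |∫ ω, f ω ∂μ| ≤ ∫ ω, g ω ∂μ := by
    intro f g hf hg h
    calc |∫ ω, f ω ∂μ| ≤ ∫ ω, |f ω| ∂μ := by
          simpa [Real.norm_eq_abs] using norm_integral_le_integral_norm (μ := μ) f
      _ ≤ ∫ ω, g ω ∂μ := integral_mono hf.abs hg h
  have hdiff : ∀ (f g h : Ω → ℝ), Integrable f μ → Integrable g μ → Integrable h μ →
      (∀ ω, |f ω - g ω| ≤ h ω) → |(∫ ω, f ω ∂μ) - ∫ ω, g ω ∂μ| ≤ ∫ ω, h ω ∂μ := by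
    intro f g h hf hg hh hb
    rw [← integral_sub hf hg]
    exact habs_int_le _ _ (hf.sub hg) hh hb
  -- I1
  have I1 : |(∫ ω, X i ω * X j ω * (X k ω * X l ω) ∂μ)
      - ∫ ω, trunc c (X i ω) * trunc c (X j ω) * (trunc c (X k ω) * trunc c (X l ω)) ∂μ|
      ≤ 16 * M / c ^ δ := by
    have h := hdiff _ _ (fun ω => (4 / c ^ δ) * V ω) hABint hA'B'int (hVint.const_mul _)
      (fun ω => (P1R hδ hc).trans_eq (by simp only [hVdef]; ring))
    rwa [integral_const_mul, hVeq, show 4 / c ^ δ * (4 * M) = 16 * M / c ^ δ by ring] at h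
  -- I2
  have I2 : |(∫ ω, X i ω * X j ω ∂μ) - ∫ ω, trunc c (X i ω) * trunc c (X j ω) ∂μ|
      ≤ (4 + 8 * M) / c ^ δ := by
    have hb : ∀ ω, |X i ω * X j ω - trunc c (X i ω) * trunc c (X j ω)|
        ≤ (1 / c ^ δ) * (4 + 2 * V ω) := by
      intro ω
      refine (P2R hδ hc).trans ?_
      rw [show (1 / c ^ δ) * (4 + 2 * V ω) = (4 + 2 * V ω) / c ^ δ by ring,
        div_le_div_iff_of_pos_right hcδ]
      have h1 := Real.rpow_nonneg (abs_nonneg (X k ω)) (4+δ)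
      have h2 := Real.rpow_nonneg (abs_nonneg (X l ω)) (4+δ)
      simp only [hVdef]; linarith
    have h := hdiff _ _ _ hAint hA'int
      ((((integrable_const (4:ℝ)).add (hVint.const_mul 2)).const_mul (1 / c ^ δ)) :
        Integrable (fun ω => (1 / c ^ δ) * (4 + 2 * V ω)) μ) hb
    have e1 : ∫ ω, (1 / c ^ δ) * (4 + 2 * V ω) ∂μ = (4 + 8 * M) / c ^ δ := by
      rw [integral_const_mul, integral_add (integrable_const 4)
        ((hVint.const_mul 2 : Integrable (fun ω => 2 * V ω) μ)), integral_const_mul, hVeq,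
        integral_const, probReal_univ]
      simp
      ring
    exact h.trans_eq e1
  -- I3
  have I3 : |(∫ ω, X k ω * X l ω ∂μ) - ∫ ω, trunc c (X k ω) * trunc c (X l ω) ∂μ|
      ≤ 8 * M / c ^ ((2:ℝ)+δ) := by
    have hc2 : 0 < c ^ ((2:ℝ)+δ) := Real.rpow_pos_of_pos hc _
    have hb : ∀ ω, |X k ω * X l ω - trunc c (X k ω) * trunc c (X l ω)|
        ≤ (2 / c ^ ((2:ℝ)+δ)) * V ω := by
      intro ω
      refine (P3R hδ hc).trans ?_
      rw [show (2 / c ^ ((2:ℝ)+δ)) * V ω = 2 * V ω / c ^ ((2:ℝ)+δ) by ring,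
        div_le_div_iff_of_pos_right hc2]
      have h1 := Real.rpow_nonneg (abs_nonneg (X i ω)) (4+δ)
      have h2 := Real.rpow_nonneg (abs_nonneg (X j ω)) (4+δ)
      simp only [hVdef]; linarith
    have h := hdiff _ _ _ hBint hB'int (hVint.const_mul _) hb
    rwa [integral_const_mul, hVeq, show 2 / c ^ ((2:ℝ)+δ) * (4 * M) = 8 * M / c ^ ((2:ℝ)+δ)
      by ring] at h
  -- I4
  have I4 : |∫ ω, X k ω * X l ω ∂μ| ≤ 2 + 4 * M := by
    have h := habs_int_le _ (fun ω => (2:ℝ) + V ω) hBint hD2int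
      (fun ω => by
        rw [abs_mul]
        have h := bdprod2 hδ (abs_nonneg (X k ω)) (abs_nonneg (X l ω))
        have h1 := Real.rpow_nonneg (abs_nonneg (X i ω)) (4+δ)
        have h2 := Real.rpow_nonneg (abs_nonneg (X j ω)) (4+δ)
        simp only [hVdef]; linarith)
    rw [integral_add (integrable_const 2) hVint, hVeq, integral_const, probReal_univ] at h
    simpa using h
  -- I4'
  have I4' : |∫ ω, X i ω * X j ω ∂μ| ≤ 2 + 4 * M := by
    have h := habs_int_le _ (fun ω => (2:ℝ) + V ω) hAint hD2int
      (fun ω => by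
        rw [abs_mul]
        have h := bdprod2 hδ (abs_nonneg (X i ω)) (abs_nonneg (X j ω))
        have h1 := Real.rpow_nonneg (abs_nonneg (X k ω)) (4+δ)
        have h2 := Real.rpow_nonneg (abs_nonneg (X l ω)) (4+δ)
        simp only [hVdef]; linarith)
    rw [integral_add (integrable_const 2) hVint, hVeq, integral_const, probReal_univ] at h
    simpa using h
  -- I5
  have I5 : |∫ ω, trunc c (X i ω) * trunc c (X j ω) ∂μ| ≤ c * c := by
    have h := habs_int_le _ (fun _ => c * c) hA'int (integrable_const _)
      (fun ω => by
        rw [abs_mul]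
        exact mul_le_mul (trunc_abs_le hc.le _) (trunc_abs_le hc.le _) (abs_nonneg _) hc.le)
    rw [integral_const, probReal_univ] at h
    simpa using h
  -- main term via weak dependence
  have hdisj : Disjoint ({i, j} : Finset ℕ) ({k, l} : Finset ℕ) := by
    simp only [Finset.disjoint_left, Finset.mem_insert, Finset.mem_singleton]
    rintro a (rfl | rfl) h <;> rcases h with rfl | rfl <;> omega
  have hLip : ∀ (a b : ℕ) (x y : ℕ → ℝ),
      |trunc c (x a) * trunc c (x b) - trunc c (y a) * trunc c (y b)|
        ≤ (2*c) * ∑ n ∈ ({a, b} : Finset ℕ), |x n - y n| := by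
    intro a b x y
    have h1 : |trunc c (x a) * trunc c (x b) - trunc c (y a) * trunc c (y b)|
        ≤ c * |x b - y b| + c * |x a - y a| := by
      have e : trunc c (x a) * trunc c (x b) - trunc c (y a) * trunc c (y b)
          = trunc c (x a) * (trunc c (x b) - trunc c (y b))
            + trunc c (y b) * (trunc c (x a) - trunc c (y a)) := by ring
      rw [e]
      refine (abs_add_le _ _).trans ?_
      rw [abs_mul, abs_mul]
      refine add_le_add ?_ ?_
      · exact mul_le_mul (trunc_abs_le hc.le _) (trunc_lip _ _ _) (abs_nonneg _) hc.le
      · exact mul_le_mul (trunc_abs_le hc.le _) (trunc_lip _ _ _) (abs_nonneg _) hc.le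
    have hsa : |x a - y a| ≤ ∑ n ∈ ({a, b} : Finset ℕ), |x n - y n| :=
      Finset.single_le_sum (f := fun n => |x n - y n|) (fun n _ => abs_nonneg _)
        (Finset.mem_insert_self a {b})
    have hsb : |x b - y b| ≤ ∑ n ∈ ({a, b} : Finset ℕ), |x n - y n| :=
      Finset.single_le_sum (f := fun n => |x n - y n|) (fun n _ => abs_nonneg _)
        (Finset.mem_insert_of_mem (Finset.mem_singleton_self b))
    have h2 := mul_le_mul_of_nonneg_left hsa hc.le
    have h3 := mul_le_mul_of_nonneg_left hsb hc.le
    calc |trunc c (x a) * trunc c (x b) - trunc c (y a) * trunc c (y b)|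
        ≤ c * |x b - y b| + c * |x a - y a| := h1
      _ ≤ 2 * c * ∑ n ∈ ({a, b} : Finset ℕ), |x n - y n| := by linarith
  have hd := hdep {i, j} {k, l} hdisj
    (fun x => trunc c (x i) * trunc c (x j)) (fun x => trunc c (x k) * trunc c (x l))
    (2*c) (2*c) (hLip i j) (hLip k l)
  have hsum : ∑ a ∈ ({i,j} : Finset ℕ), ∑ b ∈ ({k,l} : Finset ℕ),
      γ (((b:ℤ) - (a:ℤ)).natAbs) ≤ 4 * γ (k - j) := by
    have hin : ∀ a ∈ ({i,j} : Finset ℕ), ∑ b ∈ ({k,l} : Finset ℕ),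
        γ (((b:ℤ) - (a:ℤ)).natAbs) ≤ 2 * γ (k - j) := by
      intro a ha
      have h1 : ∀ b ∈ ({k,l} : Finset ℕ), γ (((b:ℤ) - (a:ℤ)).natAbs) ≤ γ (k - j) := by
        intro b hb
        apply hmono
        simp only [Finset.mem_insert, Finset.mem_singleton] at ha hb
        omega
      calc ∑ b ∈ ({k,l} : Finset ℕ), γ (((b:ℤ) - (a:ℤ)).natAbs)
          ≤ ∑ _b ∈ ({k,l} : Finset ℕ), γ (k - j) := Finset.sum_le_sum h1
        _ = (({k,l} : Finset ℕ).card : ℝ) * γ (k - j) := by rw [Finset.sum_const, nsmul_eq_mul]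
        _ ≤ 2 * γ (k - j) := by
            refine mul_le_mul_of_nonneg_right ?_ (hγ _)
            have h : ({k,l} : Finset ℕ).card ≤ 2 :=
              le_trans (Finset.card_insert_le _ _) (by simp)
            exact_mod_cast h
    calc (∑ a ∈ ({i,j} : Finset ℕ), ∑ b ∈ ({k,l} : Finset ℕ), γ (((b:ℤ) - (a:ℤ)).natAbs))
        ≤ ∑ _a ∈ ({i,j} : Finset ℕ), 2 * γ (k - j) := Finset.sum_le_sum hin
      _ = (({i,j} : Finset ℕ).card : ℝ) * (2 * γ (k - j)) := by rw [Finset.sum_const, nsmul_eq_mul]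
      _ ≤ 2 * (2 * γ (k - j)) := by
          refine mul_le_mul_of_nonneg_right ?_ (mul_nonneg (by norm_num) (hγ _))
          have h : ({i,j} : Finset ℕ).card ≤ 2 :=
            le_trans (Finset.card_insert_le _ _) (by simp)
          exact_mod_cast h
      _ = 4 * γ (k - j) := by ring
  have hmain : |cov μ (fun ω => trunc c (X i ω) * trunc c (X j ω))
      (fun ω => trunc c (X k ω) * trunc c (X l ω))| ≤ 16 * c^2 * γ (k - j) := by
    refine hd.trans ?_
    calc 2*c*(2*c) * ∑ a ∈ ({i,j} : Finset ℕ), ∑ b ∈ ({k,l} : Finset ℕ),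
          γ (((b:ℤ) - (a:ℤ)).natAbs)
        ≤ 2*c*(2*c) * (4 * γ (k - j)) := mul_le_mul_of_nonneg_left hsum (by positivity)
      _ = 16 * c^2 * γ (k - j) := by ring
  -- combination
  have hcovAB : cov μ (fun ω => X i ω * X j ω) (fun ω => X k ω * X l ω)
      = cov μ (fun ω => trunc c (X i ω) * trunc c (X j ω))
          (fun ω => trunc c (X k ω) * trunc c (X l ω))
        + ((∫ ω, X i ω * X j ω * (X k ω * X l ω) ∂μ)
           - ∫ ω, trunc c (X i ω) * trunc c (X j ω) * (trunc c (X k ω) * trunc c (X l ω)) ∂μ)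
        - ((∫ ω, X i ω * X j ω ∂μ) * (∫ ω, X k ω * X l ω ∂μ)
           - (∫ ω, trunc c (X i ω) * trunc c (X j ω) ∂μ)
             * (∫ ω, trunc c (X k ω) * trunc c (X l ω) ∂μ)) := by
    simp only [cov]
    ring
  have habs2 : ∀ x y x' y' : ℝ, |x*y - x'*y'| ≤ |x - x'| * |y| + |x'| * |y - y'| := by
    intro x y x' y'
    have e : x*y - x'*y' = (x - x')*y + x'*(y - y') := by ring
    rw [e]
    refine (abs_add_le _ _).trans ?_
    rw [abs_mul, abs_mul]
  have hEprod : |(∫ ω, X i ω * X j ω ∂μ) * (∫ ω, X k ω * X l ω ∂μ)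
      - (∫ ω, trunc c (X i ω) * trunc c (X j ω) ∂μ)
        * (∫ ω, trunc c (X k ω) * trunc c (X l ω) ∂μ)|
      ≤ ((4 + 8*M)/c^δ) * (2 + 4*M) + (c*c) * (8*M/c^((2:ℝ)+δ)) := by
    refine (habs2 _ _ _ _).trans ?_
    refine add_le_add ?_ ?_
    · exact mul_le_mul I2 I4 (abs_nonneg _) (by positivity)
    · exact mul_le_mul I5 I3 (abs_nonneg _) (mul_nonneg hc.le hc.le)
  have habs3 : ∀ a b d : ℝ, |a + b - d| ≤ |a| + |b| + |d| := by
    intro a b d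
    have h1 : |a + b - d| ≤ |a + b| + |d| := by
      rw [sub_eq_add_neg]
      simpa using abs_add_le (a+b) (-d)
    have h2 := abs_add_le a b
    linarith
  rw [hcovAB]
  refine (habs3 _ _ _).trans ?_
  have step := add_le_add (add_le_add hmain I1) hEprod
  refine step.trans ?_
  have e3 : (c*c) * (8*M/c^((2:ℝ)+δ)) = 8*M/c^δ := by
    rw [hc2δ]; field_simp
  rw [e3]
  have hfin : 16*M/c^δ + ((4+8*M)/c^δ*(2+4*M) + 8*M/c^δ) ≤ 56*(1+M)^2/c^δ := by
    rw [div_mul_eq_mul_div, ← add_div, ← add_div, div_le_div_iff_of_pos_right hcδ]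
    nlinarith [hMnn]
  linarith

set_option maxHeartbeats 1000000 in
lemma triv_bound {Ω : Type*} [MeasurableSpace Ω] (μ : Measure Ω) [IsProbabilityMeasure μ]
    (X : ℕ → Ω → ℝ) (hmeas : ∀ n, Measurable (X n))
    (δ : ℝ) (hδ : 0 < δ) (M : ℝ)
    (hintp : ∀ n, Integrable (fun ω => |X n ω| ^ (4+δ)) μ)
    (hMeq : ∀ n, ∫ ω, |X n ω| ^ (4+δ) ∂μ = M)
    (i j k l : ℕ) :
    |cov μ (fun ω => X i ω * X j ω) (fun ω => X k ω * X l ω)|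
      ≤ (4 + 4*M) + (2 + 4*M) * (2 + 4*M) := by
  have hMnn : 0 ≤ M := by
    rw [← hMeq 1]; exact integral_nonneg fun ω => Real.rpow_nonneg (abs_nonneg _) _
  set V : Ω → ℝ := fun ω =>
    |X i ω| ^ (4+δ) + |X j ω| ^ (4+δ) + |X k ω| ^ (4+δ) + |X l ω| ^ (4+δ) with hVdef
  have hVint : Integrable V μ := (((hintp i).add (hintp j)).add (hintp k)).add (hintp l)
  have hintij : Integrable (fun ω => |X i ω| ^ (4+δ) + |X j ω| ^ (4+δ)) μ :=
    (hintp i).add (hintp j)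
  have hintijk : Integrable (fun ω => |X i ω| ^ (4+δ) + |X j ω| ^ (4+δ) + |X k ω| ^ (4+δ)) μ :=
    hintij.add (hintp k)
  have hVeq : ∫ ω, V ω ∂μ = 4 * M := by
    simp only [hVdef]
    rw [integral_add hintijk (hintp l), integral_add hintij (hintp k),
        integral_add (hintp i) (hintp j), hMeq i, hMeq j, hMeq k, hMeq l]
    ring
  have hDint : Integrable (fun ω => 4 + V ω) μ := (integrable_const 4).add hVint
  have hD2int : Integrable (fun ω => 2 + V ω) μ := (integrable_const 2).add hVint
  have hAint : Integrable (fun ω => X i ω * X j ω) μ := by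
    refine Integrable.mono' hDint
      ((hmeas i).mul (hmeas j)).aestronglyMeasurable (ae_of_all _ fun ω => ?_)
    have h := bdprod2 hδ (abs_nonneg (X i ω)) (abs_nonneg (X j ω))
    have h1 := Real.rpow_nonneg (abs_nonneg (X k ω)) (4+δ)
    have h2 := Real.rpow_nonneg (abs_nonneg (X l ω)) (4+δ)
    rw [Real.norm_eq_abs, abs_mul]
    simp only [hVdef]; linarith
  have hBint : Integrable (fun ω => X k ω * X l ω) μ := by
    refine Integrable.mono' hDint
      ((hmeas k).mul (hmeas l)).aestronglyMeasurable (ae_of_all _ fun ω => ?_)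
    have h := bdprod2 hδ (abs_nonneg (X k ω)) (abs_nonneg (X l ω))
    have h1 := Real.rpow_nonneg (abs_nonneg (X i ω)) (4+δ)
    have h2 := Real.rpow_nonneg (abs_nonneg (X j ω)) (4+δ)
    rw [Real.norm_eq_abs, abs_mul]
    simp only [hVdef]; linarith
  have hABint : Integrable (fun ω => X i ω * X j ω * (X k ω * X l ω)) μ := by
    refine Integrable.mono' hDint
      (((hmeas i).mul (hmeas j)).mul ((hmeas k).mul (hmeas l))).aestronglyMeasurable
      (ae_of_all _ fun ω => ?_)
    have h := bdprod4 hδ (abs_nonneg (X i ω)) (abs_nonneg (X j ω)) (abs_nonneg (X k ω))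
      (abs_nonneg (X l ω))
    rw [Real.norm_eq_abs, abs_mul, abs_mul, abs_mul]
    simp only [hVdef]; nlinarith [abs_nonneg (X i ω), abs_nonneg (X j ω)]
  have habs_int_le : ∀ (f g : Ω → ℝ), Integrable f μ → Integrable g μ → (∀ ω, |f ω| ≤ g ω) →
      |∫ ω, f ω ∂μ| ≤ ∫ ω, g ω ∂μ := by
    intro f g hf hg h
    calc |∫ ω, f ω ∂μ| ≤ ∫ ω, |f ω| ∂μ := by
          simpa [Real.norm_eq_abs] using norm_integral_le_integral_norm (μ := μ) f
      _ ≤ ∫ ω, g ω ∂μ := integral_mono hf.abs hg h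
  have hIAB : |∫ ω, X i ω * X j ω * (X k ω * X l ω) ∂μ| ≤ 4 + 4*M := by
    have h := habs_int_le _ (fun ω => (4:ℝ) + V ω) hABint hDint (fun ω => by
      rw [abs_mul, abs_mul, abs_mul]
      have h := bdprod4 hδ (abs_nonneg (X i ω)) (abs_nonneg (X j ω)) (abs_nonneg (X k ω))
        (abs_nonneg (X l ω))
      simp only [hVdef]; nlinarith [abs_nonneg (X i ω), abs_nonneg (X j ω)])
    rw [integral_add (integrable_const 4) hVint, hVeq, integral_const, probReal_univ] at h
    simpa using h
  have I4 : |∫ ω, X k ω * X l ω ∂μ| ≤ 2 + 4 * M := by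
    have h := habs_int_le _ (fun ω => (2:ℝ) + V ω) hBint hD2int
      (fun ω => by
        rw [abs_mul]
        have h := bdprod2 hδ (abs_nonneg (X k ω)) (abs_nonneg (X l ω))
        have h1 := Real.rpow_nonneg (abs_nonneg (X i ω)) (4+δ)
        have h2 := Real.rpow_nonneg (abs_nonneg (X j ω)) (4+δ)
        simp only [hVdef]; linarith)
    rw [integral_add (integrable_const 2) hVint, hVeq, integral_const, probReal_univ] at h
    simpa using h
  have I4' : |∫ ω, X i ω * X j ω ∂μ| ≤ 2 + 4 * M := by
    have h := habs_int_le _ (fun ω => (2:ℝ) + V ω) hAint hD2int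
      (fun ω => by
        rw [abs_mul]
        have h := bdprod2 hδ (abs_nonneg (X i ω)) (abs_nonneg (X j ω))
        have h1 := Real.rpow_nonneg (abs_nonneg (X k ω)) (4+δ)
        have h2 := Real.rpow_nonneg (abs_nonneg (X l ω)) (4+δ)
        simp only [hVdef]; linarith)
    rw [integral_add (integrable_const 2) hVint, hVeq, integral_const, probReal_univ] at h
    simpa using h
  have key : ∀ x y z : ℝ, |x - y*z| ≤ |x| + |y| * |z| := by
    intro x y z
    rw [sub_eq_add_neg]
    refine (abs_add_le _ _).trans ?_
    rw [abs_neg, abs_mul]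
  simp only [cov]
  refine (key _ _ _).trans ?_
  have hm := mul_le_mul I4' I4 (abs_nonneg _) (by linarith : (0:ℝ) ≤ 2 + 4*M)
  linarith

set_option maxHeartbeats 1000000 in
theorem stmt15 {Ω : Type*} [MeasurableSpace Ω] (μ : Measure Ω) [IsProbabilityMeasure μ]
    (X : ℕ → Ω → ℝ) (hmeas : ∀ n, Measurable (X n))
    (γ : ℕ → ℝ) (hγ : ∀ k, 0 ≤ γ k) (hmono : Antitone γ)
    (hdep : LWeakDepNat μ X γ)
    (hstat : ∀ k m : ℕ, IdentDistrib (fun ω (i : Fin m) => X (i + k) ω)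
      (fun ω (i : Fin m) => X i ω) μ μ)
    (hcent : ∀ n, ∫ ω, X n ω ∂μ = 0)
    (δ : ℝ) (hδ : 0 < δ)
    (hmom : Integrable (fun ω => |X 1 ω| ^ (4 + δ)) μ) :
    (∃ C : ℝ, 0 < C ∧ ∀ i j k l : ℕ, i ≤ j → j < k → k ≤ l →
      |cov μ (fun ω => X i ω * X j ω) (fun ω => X k ω * X l ω)|
        ≤ C * γ (k - j) ^ (δ / (4 + δ))) ∧
    ((∃ c0 : ℝ, ∀ k : ℕ, 1 ≤ k → γ k ≤ c0 * (k : ℝ) ^ (-(2 + 8 / δ))) →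
      ∃ C' : ℝ, ∀ i j k l : ℕ, i ≤ j → j < k → k ≤ l →
        |cov μ (fun ω => X i ω * X j ω) (fun ω => X k ω * X l ω)|
          ≤ C' * ((k : ℝ) - (j : ℝ)) ^ (-(2 : ℝ))) := by
  have hp0 : (0:ℝ) < 4 + δ := by linarith
  have hid0 : ∀ n, IdentDistrib (X n) (X 0) μ μ := by
    intro n
    have h := (hstat n 1).comp (measurable_pi_apply (0 : Fin 1))
    simpa [Function.comp_def] using h
  have hid : ∀ n, IdentDistrib (X n) (X 1) μ μ := fun n => (hid0 n).trans (hid0 1).symm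
  have hidp : ∀ n, IdentDistrib (fun ω => |X n ω| ^ (4+δ)) (fun ω => |X 1 ω| ^ (4+δ)) μ μ := by
    intro n
    exact (hid n).comp (show Measurable (fun x : ℝ => |x| ^ (4+δ)) by fun_prop)
  have hintp : ∀ n, Integrable (fun ω => |X n ω| ^ (4+δ)) μ :=
    fun n => (hidp n).integrable_iff.mpr hmom
  set M : ℝ := ∫ ω, |X 1 ω| ^ (4+δ) ∂μ with hM
  have hMnn : 0 ≤ M := integral_nonneg fun ω => Real.rpow_nonneg (abs_nonneg _) _
  have hMeq : ∀ n, ∫ ω, |X n ω| ^ (4+δ) ∂μ = M := fun n => (hidp n).integral_eq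
  have hexp_pos : 0 < δ / (4 + δ) := div_pos hδ hp0
  have hpart1 : ∀ i j k l : ℕ, i ≤ j → j < k → k ≤ l →
      |cov μ (fun ω => X i ω * X j ω) (fun ω => X k ω * X l ω)|
        ≤ 100 * (1 + M)^2 * γ (k - j) ^ (δ / (4 + δ)) := by
    intro i j k l hij hjk hkl
    rcases (hγ (k - j)).eq_or_lt with hG0 | hGpos
    · -- γ (k-j) = 0
      have hzero : ∀ c : ℝ, 0 < c →
          |cov μ (fun ω => X i ω * X j ω) (fun ω => X k ω * X l ω)|
            ≤ 56 * (1 + M)^2 * c ^ (-δ) := by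
        intro c hc
        have h := key_bound μ X hmeas γ hγ hmono hdep δ hδ M hintp hMeq i j k l hij hjk hkl c hc
        rw [← hG0] at h
        rw [Real.rpow_neg hc.le]
        calc |cov μ (fun ω => X i ω * X j ω) (fun ω => X k ω * X l ω)|
            ≤ 16 * c^2 * 0 + 56 * (1 + M)^2 / c ^ δ := h
          _ = 56 * (1 + M)^2 * (c ^ δ)⁻¹ := by ring
      have hlim : Tendsto (fun c : ℝ => 56 * (1 + M)^2 * c ^ (-δ)) atTop (nhds 0) := by
        have h := (tendsto_rpow_neg_atTop hδ).const_mul (56 * (1 + M)^2)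
        simpa using h
      have hle : |cov μ (fun ω => X i ω * X j ω) (fun ω => X k ω * X l ω)| ≤ 0 :=
        ge_of_tendsto hlim (eventually_atTop.2 ⟨1, fun c hc => hzero c (by linarith)⟩)
      rw [← hG0, Real.zero_rpow (ne_of_gt hexp_pos)]
      simpa using hle
    · rcases le_or_gt (γ (k - j)) 1 with hG1 | hG1
      · -- 0 < γ ≤ 1
        set G := γ (k - j) with hGdef
        set c := G ^ (-(1/(4+δ))) with hcdef
        have hcpos : 0 < c := Real.rpow_pos_of_pos hGpos _
        have h := key_bound μ X hmeas γ hγ hmono hdep δ hδ M hintp hMeq i j k l hij hjk hkl c hcpos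
        have e1 : c^2 * G = G ^ ((2+δ)/(4+δ)) := by
          rw [show c^2 = c * c by ring, hcdef, ← Real.rpow_add hGpos]
          nth_rewrite 2 [show G = G ^ (1:ℝ) from (Real.rpow_one G).symm]
          rw [← Real.rpow_add hGpos]
          congr 1
          field_simp
          ring
        have e2 : 56 * (1 + M)^2 / c ^ δ = 56 * (1 + M)^2 * G ^ (δ/(4+δ)) := by
          rw [div_eq_mul_inv]
          congr 1
          rw [hcdef, ← Real.rpow_mul hGpos.le, ← Real.rpow_neg hGpos.le]
          congr 1
          field_simp
        have hmono2 : G ^ ((2+δ)/(4+δ)) ≤ G ^ (δ/(4+δ)) := by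
          refine Real.rpow_le_rpow_of_exponent_ge hGpos hG1 ?_
          rw [div_le_div_iff_of_pos_right hp0]
          linarith
        have hrnn : (0:ℝ) ≤ G ^ (δ/(4+δ)) := Real.rpow_nonneg hGpos.le _
        calc |cov μ (fun ω => X i ω * X j ω) (fun ω => X k ω * X l ω)|
            ≤ 16 * c^2 * G + 56 * (1 + M)^2 / c ^ δ := h
          _ = 16 * (c^2 * G) + 56 * (1 + M)^2 / c ^ δ := by ring
          _ = 16 * G ^ ((2+δ)/(4+δ)) + 56 * (1 + M)^2 * G ^ (δ/(4+δ)) := by rw [e1, e2]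
          _ ≤ 100 * (1 + M)^2 * G ^ (δ/(4+δ)) := by
              nlinarith [mul_le_mul_of_nonneg_left hmono2 (by norm_num : (0:ℝ) ≤ 16),
                mul_nonneg hMnn hrnn, mul_nonneg (mul_nonneg hMnn hMnn) hrnn,
                mul_nonneg hMnn (mul_nonneg hMnn hrnn)]
      · -- γ > 1
        have h := triv_bound μ X hmeas δ hδ M hintp hMeq i j k l
        have hge1 : 1 ≤ γ (k - j) ^ (δ/(4+δ)) := by
          have := Real.rpow_le_rpow (by norm_num : (0:ℝ) ≤ 1) hG1.le hexp_pos.le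
          rwa [Real.one_rpow] at this
        refine h.trans ?_
        nlinarith [hMnn, hge1, mul_nonneg hMnn hMnn]
  refine ⟨⟨100 * (1 + M)^2, by nlinarith [hMnn], hpart1⟩, ?_⟩
  rintro ⟨c0, hc0⟩
  refine ⟨100 * (1 + M)^2 * c0 ^ (δ/(4+δ)), ?_⟩
  intro i j k l hij hjk hkl
  have hc0nn : 0 ≤ c0 := by
    have h1 := hc0 1 le_rfl
    have h2 := hγ 1
    rw [Nat.cast_one, Real.one_rpow, mul_one] at h1
    linarith
  have hkj : 1 ≤ k - j := by omega
  have hkjpos : (0:ℝ) < ((k - j : ℕ) : ℝ) := by exact_mod_cast hkj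
  have hcast : ((k - j : ℕ) : ℝ) = (k:ℝ) - (j:ℝ) := by
    rw [Nat.cast_sub hjk.le]
  calc |cov μ (fun ω => X i ω * X j ω) (fun ω => X k ω * X l ω)|
      ≤ 100 * (1 + M)^2 * γ (k - j) ^ (δ/(4+δ)) := hpart1 i j k l hij hjk hkl
    _ ≤ 100 * (1 + M)^2 * (c0 * ((k - j : ℕ) : ℝ) ^ (-(2 + 8/δ))) ^ (δ/(4+δ)) := by
        refine mul_le_mul_of_nonneg_left ?_ (by nlinarith [hMnn])
        exact Real.rpow_le_rpow (hγ _) (hc0 _ hkj) hexp_pos.le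
    _ = 100 * (1 + M)^2 * c0 ^ (δ/(4+δ)) * ((k:ℝ) - (j:ℝ)) ^ (-(2:ℝ)) := by
        rw [Real.mul_rpow hc0nn (Real.rpow_nonneg hkjpos.le _),
          ← Real.rpow_mul hkjpos.le,
          show -(2 + 8/δ) * (δ/(4+δ)) = -(2:ℝ) by field_simp; ring,
          hcast]
        ring
end
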